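/- Let d = 2, s ∈ (0,1), Ω = {(x,y) ∈ ℝ² : 0 < x,y < 1 and x < 2y < 3x}, and μ = δ_{e₁} + δ_{e₂} where e₁ = (1,0) and e₂ = (0,1). Define u : ℝ² → ℝ by u(x,y) = (xy)^{-1} for (x,y) ∈ Ω and u = 0 otherwise. Then u ∉ L¹(Ω), but ∫_{ℝ²} |u(x,y)| ν*(x,y) d(x,y) < ∞, i.e., u ∈ L¹(ℝ², ν*(x)dx). -/

import Mathlib

open MeasureTheory Metric Set Filter Topology
open scoped ENNReal

noncomputable section

/-- The truncated stable operator `A_s^κ`. -/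
def AsTrunc {d : ℕ} (s : ℝ) (μ : Measure (sphere (0 : EuclideanSpace ℝ (Fin d)) 1))
    (u : EuclideanSpace ℝ (Fin d) → ℝ) (κ : ℝ) (x : EuclideanSpace ℝ (Fin d)) : ℝ :=
  ∫ r in {r : ℝ | κ ≤ |r|},
    ∫ θ : sphere (0 : EuclideanSpace ℝ (Fin d)) 1,
      (u x - u (x + r • (θ : EuclideanSpace ℝ (Fin d)))) * |r| ^ (-(1 + 2 * s)) ∂μ

/-- The stable operator `A_s` as a principal value
`A_s u (x) = lim_{κ → 0+} ∫_{|r| ≥ κ} ∫_{S^{d-1}} (u x - u (x + rθ)) |r|^{-1-2s} μ(dθ) dr`. -/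
def As {d : ℕ} (s : ℝ) (μ : Measure (sphere (0 : EuclideanSpace ℝ (Fin d)) 1))
    (u : EuclideanSpace ℝ (Fin d) → ℝ) (x : EuclideanSpace ℝ (Fin d)) : ℝ :=
  limUnder (𝓝[>] (0 : ℝ)) (fun κ => AsTrunc s μ u κ x)

/-- The tail weight `ν⋆(x) = ∫_ℝ ∫_{S^{d-1}} 1_Ω(x + rθ) (1+|r|)^{-1-2s} μ(dθ) dr`. -/
def nuStar {d : ℕ} (s : ℝ) (μ : Measure (sphere (0 : EuclideanSpace ℝ (Fin d)) 1))
    (Ω : Set (EuclideanSpace ℝ (Fin d))) (x : EuclideanSpace ℝ (Fin d)) : ℝ :=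
  ∫ r : ℝ, ∫ θ : sphere (0 : EuclideanSpace ℝ (Fin d)) 1,
    Ω.indicator (fun _ => (1 : ℝ)) (x + r • (θ : EuclideanSpace ℝ (Fin d))) *
      (1 + |r|) ^ (-(1 + 2 * s)) ∂μ

/-- The domain `Ω = {(x,y) : 0 < x,y < 1, x < 2y < 3x}` of Example A.2. -/
def exOmega : Set (EuclideanSpace ℝ (Fin 2)) :=
  {p | 0 < p 0 ∧ p 0 < 1 ∧ 0 < p 1 ∧ p 1 < 1 ∧ p 0 < 2 * p 1 ∧ 2 * p 1 < 3 * p 0}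

/-- The first standard basis vector as a point of the unit sphere `S¹ ⊂ ℝ²`. -/
def e₁ : sphere (0 : EuclideanSpace ℝ (Fin 2)) 1 :=
  ⟨EuclideanSpace.single (0 : Fin 2) (1 : ℝ), by
    simp [mem_sphere_iff_norm, EuclideanSpace.norm_single]⟩

/-- The second standard basis vector as a point of the unit sphere `S¹ ⊂ ℝ²`. -/
def e₂ : sphere (0 : EuclideanSpace ℝ (Fin 2)) 1 :=
  ⟨EuclideanSpace.single (1 : Fin 2) (1 : ℝ), by
    simp [mem_sphere_iff_norm, EuclideanSpace.norm_single]⟩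

namespace Aux13

abbrev E2 := EuclideanSpace ℝ (Fin 2)

/-- The identification of `ℝ²` (Euclidean) with `ℝ × ℝ`. -/
def T : E2 ≃ᵐ ℝ × ℝ :=
  (MeasurableEquiv.toLp 2 (Fin 2 → ℝ)).symm.trans (MeasurableEquiv.finTwoArrow)

lemma hT : MeasurePreserving T volume volume :=
  (EuclideanSpace.volume_preserving_symm_measurableEquiv_toLp (Fin 2)).trans
    (volume_preserving_finTwoArrow ℝ)

def Om' : Set (ℝ × ℝ) :=
  {z | 0 < z.1 ∧ (z.1 < 1 ∧ (0 < z.2 ∧ (z.2 < 1 ∧ (z.1 < 2 * z.2 ∧ 2 * z.2 < 3 * z.1))))}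

lemma hOm'm : MeasurableSet Om' :=
  (measurableSet_lt measurable_const measurable_fst).inter
    ((measurableSet_lt measurable_fst measurable_const).inter
      ((measurableSet_lt measurable_const measurable_snd).inter
        ((measurableSet_lt measurable_snd measurable_const).inter
          ((measurableSet_lt measurable_fst (measurable_snd.const_mul 2)).inter
            (measurableSet_lt (measurable_snd.const_mul 2) (measurable_fst.const_mul 3))))))

lemma exOmega_eq : exOmega = T ⁻¹' Om' := rfl

lemma hΩm : MeasurableSet exOmega := exOmega_eq ▸ hOm'm.preimage T.measurable

lemma meas_coord0 : Measurable (fun p : E2 => p 0) := measurable_fst.comp T.measurable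

lemma meas_coord1 : Measurable (fun p : E2 => p 1) := measurable_snd.comp T.measurable

lemma ap10 (p : E2) (r : ℝ) : (p + r • (e₁ : E2)) 0 = p 0 + r := by
  simp [e₁, EuclideanSpace.single_apply]

lemma ap11 (p : E2) (r : ℝ) : (p + r • (e₁ : E2)) 1 = p 1 := by
  simp [e₁, EuclideanSpace.single_apply]

lemma ap20 (p : E2) (r : ℝ) : (p + r • (e₂ : E2)) 0 = p 0 := by
  simp [e₂, EuclideanSpace.single_apply]

lemma ap21 (p : E2) (r : ℝ) : (p + r • (e₂ : E2)) 1 = p 1 + r := by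
  simp [e₂, EuclideanSpace.single_apply]

lemma mem_add_e₁ (p : E2) (r : ℝ) : p + r • (e₁ : E2) ∈ exOmega ↔
    (0 < p 0 + r ∧ p 0 + r < 1 ∧ 0 < p 1 ∧ p 1 < 1 ∧ p 0 + r < 2 * p 1 ∧
      2 * p 1 < 3 * (p 0 + r)) := by
  simp only [exOmega, mem_setOf_eq, ap10, ap11]

lemma mem_add_e₂ (p : E2) (r : ℝ) : p + r • (e₂ : E2) ∈ exOmega ↔
    (0 < p 0 ∧ p 0 < 1 ∧ 0 < p 1 + r ∧ p 1 + r < 1 ∧ p 0 < 2 * (p 1 + r) ∧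
      2 * (p 1 + r) < 3 * p 0) := by
  simp only [exOmega, mem_setOf_eq, ap20, ap21]

/-- The explicit integrand after evaluating the dirac measures. -/
def g (s : ℝ) (p : E2) (r : ℝ) : ℝ :=
  (exOmega.indicator (fun _ => (1 : ℝ)) (p + r • (e₁ : E2)) +
    exOmega.indicator (fun _ => (1 : ℝ)) (p + r • (e₂ : E2))) * (1 + |r|) ^ (-(1 + 2 * s))

lemma g_nonneg (s : ℝ) (p : E2) (r : ℝ) : 0 ≤ g s p r := by
  apply mul_nonneg
  · exact add_nonneg (indicator_nonneg (fun _ _ => zero_le_one) _)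
      (indicator_nonneg (fun _ _ => zero_le_one) _)
  · exact Real.rpow_nonneg (by positivity) _

lemma inner_eq (s : ℝ) (p : E2) (r : ℝ) :
    (∫ θ : sphere (0 : E2) 1,
        exOmega.indicator (fun _ => (1 : ℝ)) (p + r • (θ : E2)) * (1 + |r|) ^ (-(1 + 2 * s))
        ∂(Measure.dirac e₁ + Measure.dirac e₂)) = g s p r := by
  have hf : Measurable (fun θ : sphere (0 : E2) 1 =>
      exOmega.indicator (fun _ => (1 : ℝ)) (p + r • (θ : E2)) * (1 + |r|) ^ (-(1 + 2 * s))) := by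
    refine Measurable.mul_const ?_ _
    exact (measurable_const.indicator hΩm).comp
      ((continuous_const.add (continuous_subtype_val.const_smul r)).measurable)
  rw [integral_add_measure
      ⟨hf.aestronglyMeasurable, by simp only [HasFiniteIntegral, lintegral_dirac]; finiteness⟩
      ⟨hf.aestronglyMeasurable, by simp only [HasFiniteIntegral, lintegral_dirac]; finiteness⟩,
    integral_dirac, integral_dirac, g, add_mul]

lemma nuStar_eq (s : ℝ) (p : E2) :
    nuStar s (Measure.dirac e₁ + Measure.dirac e₂) exOmega p = ∫ r : ℝ, g s p r := by
  unfold nuStar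
  simp only [inner_eq]

lemma nuStar_nonneg (s : ℝ) (p : E2) :
    0 ≤ nuStar s (Measure.dirac e₁ + Measure.dirac e₂) exOmega p := by
  rw [nuStar_eq]
  exact integral_nonneg (g_nonneg s p)

lemma nuStar_meas (s : ℝ) :
    Measurable (fun p => nuStar s (Measure.dirac e₁ + Measure.dirac e₂) exOmega p) := by
  have heq : (fun p => nuStar s (Measure.dirac e₁ + Measure.dirac e₂) exOmega p) =
      fun p => ∫ r : ℝ, g s p r := funext (nuStar_eq s)
  rw [heq]
  have hG : Measurable (fun q : E2 × ℝ => g s q.1 q.2) := by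
    unfold g
    apply Measurable.mul
    · apply Measurable.add
      · exact (measurable_const.indicator hΩm).comp
          ((continuous_fst.add (continuous_snd.smul continuous_const)).measurable)
      · exact (measurable_const.indicator hΩm).comp
          ((continuous_fst.add (continuous_snd.smul continuous_const)).measurable)
    · exact ((continuous_const.add continuous_snd.abs).rpow_const
        (fun q => Or.inl (show (1:ℝ) + |q.2| ≠ 0 by positivity))).measurable
  exact (hG.stronglyMeasurable.integral_prod_right').measurable

lemma nuStar_le (s : ℝ) (hs : 0 < s) (p : E2) (hp : p ∈ exOmega) :
    nuStar s (Measure.dirac e₁ + Measure.dirac e₂) exOmega p ≤ 4/3 * p 1 + p 0 := by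
  have hmem := hp
  obtain ⟨hx0, hx1, hy0, hy1, hxy, hyx⟩ := hmem
  rw [nuStar_eq]
  set I₁ : Set ℝ := Ioo (2 * p 1 / 3 - p 0) (2 * p 1 - p 0) with hI₁
  set I₂ : Set ℝ := Ioo (p 0 / 2 - p 1) (3 * p 0 / 2 - p 1) with hI₂
  have hind : ∀ (I : Set ℝ) (r : ℝ), (0:ℝ) ≤ I.indicator (fun _ => (1:ℝ)) r :=
    fun I r => indicator_nonneg (fun _ _ => zero_le_one) r
  have key : ∀ r : ℝ, g s p r ≤
      I₁.indicator (fun _ => (1:ℝ)) r + I₂.indicator (fun _ => (1:ℝ)) r := by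
    intro r
    have h1 : exOmega.indicator (fun _ => (1:ℝ)) (p + r • (e₁ : E2)) ≤
        I₁.indicator (fun _ => (1:ℝ)) r := by
      by_cases h : p + r • (e₁ : E2) ∈ exOmega
      · rw [indicator_of_mem h, indicator_of_mem]
        rw [mem_add_e₁] at h
        exact ⟨by linarith [h.2.2.2.2.2], by linarith [h.2.2.2.2.1]⟩
      · rw [indicator_of_notMem h]; exact hind I₁ r
    have h2 : exOmega.indicator (fun _ => (1:ℝ)) (p + r • (e₂ : E2)) ≤
        I₂.indicator (fun _ => (1:ℝ)) r := by
      by_cases h : p + r • (e₂ : E2) ∈ exOmega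
      · rw [indicator_of_mem h, indicator_of_mem]
        rw [mem_add_e₂] at h
        exact ⟨by linarith [h.2.2.2.2.1], by linarith [h.2.2.2.2.2]⟩
      · rw [indicator_of_notMem h]; exact hind I₂ r
    have hc1 : (1 + |r|) ^ (-(1 + 2 * s)) ≤ (1:ℝ) :=
      Real.rpow_le_one_of_one_le_of_nonpos (by linarith [abs_nonneg r]) (by linarith)
    calc g s p r ≤ (exOmega.indicator (fun _ => (1:ℝ)) (p + r • (e₁ : E2)) +
          exOmega.indicator (fun _ => (1:ℝ)) (p + r • (e₂ : E2))) * 1 := by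
            exact mul_le_mul_of_nonneg_left hc1
              (add_nonneg (indicator_nonneg (fun _ _ => zero_le_one) _)
                (indicator_nonneg (fun _ _ => zero_le_one) _))
      _ ≤ I₁.indicator (fun _ => (1:ℝ)) r + I₂.indicator (fun _ => (1:ℝ)) r := by
            rw [mul_one]; exact add_le_add h1 h2
  have hint : ∀ (a b : ℝ), Integrable ((Ioo a b).indicator (fun _ => (1:ℝ))) := by
    intro a b
    rw [integrable_indicator_iff measurableSet_Ioo]
    exact integrableOn_const measure_Ioo_lt_top.ne
  have hval : ∀ (a b : ℝ), a ≤ b → ∫ r : ℝ, (Ioo a b).indicator (fun _ => (1:ℝ)) r = b - a := by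
    intro a b h
    rw [MeasureTheory.integral_indicator_const (1:ℝ) measurableSet_Ioo, Real.volume_real_Ioo_of_le h]
    simp
  calc (∫ r : ℝ, g s p r) ≤
      ∫ r : ℝ, (I₁.indicator (fun _ => (1:ℝ)) r + I₂.indicator (fun _ => (1:ℝ)) r) :=
        integral_mono_of_nonneg (Eventually.of_forall (g_nonneg s p))
          ((hint _ _).add (hint _ _)) (Eventually.of_forall key)
    _ = (2 * p 1 - p 0 - (2 * p 1 / 3 - p 0)) + (3 * p 0 / 2 - p 1 - (p 0 / 2 - p 1)) := by
        rw [integral_add (hint _ _) (hint _ _), hval _ _ (by linarith), hval _ _ (by linarith)]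
    _ = 4/3 * p 1 + p 0 := by ring

lemma prod_le (s : ℝ) (hs : 0 < s) (p : E2) :
    |exOmega.indicator (fun p => (p 0 * p 1)⁻¹) p| *
      nuStar s (Measure.dirac e₁ + Measure.dirac e₂) exOmega p ≤
    exOmega.indicator (fun p => 4 * (p 0)⁻¹) p := by
  by_cases hp : p ∈ exOmega
  · rw [indicator_of_mem hp, indicator_of_mem hp]
    have hmem := hp
    obtain ⟨hx0, hx1, hy0, hy1, hxy, hyx⟩ := hmem
    rw [abs_of_pos (by positivity)]
    calc (p 0 * p 1)⁻¹ * nuStar s (Measure.dirac e₁ + Measure.dirac e₂) exOmega p ≤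
        (p 0 * p 1)⁻¹ * (4/3 * p 1 + p 0) :=
          mul_le_mul_of_nonneg_left (nuStar_le s hs p hp) (by positivity)
      _ ≤ 4 * (p 0)⁻¹ := by
          have e1 : (p 0 * p 1)⁻¹ * (4/3 * p 1 + p 0) = 4/3 * (p 0)⁻¹ + (p 1)⁻¹ := by
            field_simp
          have e2 : (p 1)⁻¹ ≤ 2 * (p 0)⁻¹ := by
            have h : (p 0 / 2)⁻¹ = 2 * (p 0)⁻¹ := by field_simp
            have h2 := inv_anti₀ (by positivity : (0:ℝ) < p 0 / 2) (by linarith : p 0 / 2 ≤ p 1)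
            rw [h] at h2; exact h2
          have e3 : (0:ℝ) ≤ (p 0)⁻¹ := by positivity
          rw [e1]; linarith
  · rw [indicator_of_notMem hp, indicator_of_notMem hp]
    simp

section RRside

def S2 : Set (ℝ × ℝ) := {z | z.1 ∈ Ioo (0:ℝ) 1 ∧ z.2 ∈ Ioo (z.1/2) (3*z.1/2)}

lemma hS2m : MeasurableSet S2 :=
  ((measurableSet_lt measurable_const measurable_fst).inter
    (measurableSet_lt measurable_fst measurable_const)).inter
    ((measurableSet_lt (measurable_fst.div_const 2) measurable_snd).inter
      (measurableSet_lt measurable_snd ((measurable_fst.const_mul 3).div_const 2)))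

def F2 : ℝ × ℝ → ℝ≥0∞ := S2.indicator (fun z => ENNReal.ofReal (4 * z.1⁻¹))

lemma hF2m : Measurable F2 :=
  (ENNReal.measurable_ofReal.comp (measurable_fst.inv.const_mul 4)).indicator hS2m

lemma F2_lintegral : ∫⁻ z, F2 z < ⊤ := by
  rw [Measure.volume_eq_prod, lintegral_prod _ hF2m.aemeasurable]
  have inner : ∀ x : ℝ, ∫⁻ y, F2 (x, y) ≤ (Ioo (0:ℝ) 1).indicator (fun _ => (4:ℝ≥0∞)) x := by
    intro x
    by_cases hx : x ∈ Ioo (0:ℝ) 1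
    · have hxy : ∀ y, F2 (x, y) = (Ioo (x/2) (3*x/2)).indicator
          (fun _ => ENNReal.ofReal (4 * x⁻¹)) y := by
        intro y
        by_cases hy : y ∈ Ioo (x/2) (3*x/2)
        · rw [F2, indicator_of_mem (show _ ∈ S2 from ⟨hx, hy⟩), indicator_of_mem hy]
        · rw [F2, indicator_of_notMem (fun h => hy h.2), indicator_of_notMem hy]
      rw [lintegral_congr hxy, lintegral_indicator measurableSet_Ioo, setLIntegral_const,
        Real.volume_Ioo, indicator_of_mem hx]
      have hx0 : 0 < x := hx.1
      rw [← ENNReal.ofReal_mul (by positivity)]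
      have h4 : 4 * x⁻¹ * (3*x/2 - x/2) = 4 := by field_simp; ring
      rw [h4]
      simp
    · have hxy : ∀ y, F2 (x, y) = 0 := by
        intro y
        exact indicator_of_notMem (fun h => hx h.1) _
      rw [lintegral_congr hxy, lintegral_zero, indicator_of_notMem hx]
  calc (∫⁻ x, ∫⁻ y, F2 (x, y)) ≤ ∫⁻ x, (Ioo (0:ℝ) 1).indicator (fun _ => (4:ℝ≥0∞)) x :=
        lintegral_mono inner
    _ = 4 * volume (Ioo (0:ℝ) 1) := by
        rw [lintegral_indicator measurableSet_Ioo, setLIntegral_const]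
    _ < ⊤ := by rw [Real.volume_Ioo]; finiteness

def Sl : Set (ℝ × ℝ) := {z | z.1 ∈ Ioo (0:ℝ) (2/3) ∧ z.2 ∈ Ioo (z.1/2) z.1}

lemma hSlm : MeasurableSet Sl :=
  ((measurableSet_lt measurable_const measurable_fst).inter
    (measurableSet_lt measurable_fst measurable_const)).inter
    ((measurableSet_lt (measurable_fst.div_const 2) measurable_snd).inter
      (measurableSet_lt measurable_snd measurable_fst))

def Hl : ℝ × ℝ → ℝ≥0∞ := Sl.indicator (fun z => ENNReal.ofReal ((z.1^2)⁻¹))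

lemma hHlm : Measurable Hl :=
  (ENNReal.measurable_ofReal.comp (measurable_fst.pow_const 2).inv).indicator hSlm

lemma Hl_lintegral : ∫⁻ z, Hl z = ⊤ := by
  rw [Measure.volume_eq_prod, lintegral_prod _ hHlm.aemeasurable]
  have inner : ∀ x : ℝ, ∫⁻ y, Hl (x, y) =
      (Ioo (0:ℝ) (2/3)).indicator (fun x => ENNReal.ofReal ((2*x)⁻¹)) x := by
    intro x
    by_cases hx : x ∈ Ioo (0:ℝ) (2/3)
    · have hxy : ∀ y, Hl (x, y) = (Ioo (x/2) x).indicator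
          (fun _ => ENNReal.ofReal ((x^2)⁻¹)) y := by
        intro y
        by_cases hy : y ∈ Ioo (x/2) x
        · rw [Hl, indicator_of_mem (show _ ∈ Sl from ⟨hx, hy⟩), indicator_of_mem hy]
        · rw [Hl, indicator_of_notMem (fun h => hy h.2), indicator_of_notMem hy]
      rw [lintegral_congr hxy, lintegral_indicator measurableSet_Ioo, setLIntegral_const,
        Real.volume_Ioo, indicator_of_mem hx]
      have hx0 : 0 < x := hx.1
      rw [← ENNReal.ofReal_mul (by positivity)]
      congr 1
      field_simp
      ring
    · have hxy : ∀ y, Hl (x, y) = 0 := fun y => indicator_of_notMem (fun h => hx h.1) _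
      rw [lintegral_congr hxy, lintegral_zero, indicator_of_notMem hx]
  simp only [inner]
  rw [lintegral_indicator measurableSet_Ioo]
  by_contra h
  have hlt : ∫⁻ x in Ioo (0:ℝ) (2/3), ENNReal.ofReal ((2*x)⁻¹) < ⊤ := lt_top_iff_ne_top.2 h
  have hio : IntegrableOn (fun x : ℝ => (2*x)⁻¹) (Ioo (0:ℝ) (2/3)) := by
    constructor
    · exact ((measurable_id'.const_mul 2).inv).aestronglyMeasurable
    · rw [HasFiniteIntegral]
      have hae : ∀ᵐ x ∂(volume.restrict (Ioo (0:ℝ) (2/3))),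
          ‖(2*x)⁻¹‖ₑ = ENNReal.ofReal ((2*x)⁻¹) := by
        filter_upwards [ae_restrict_mem measurableSet_Ioo] with x hx
        exact Real.enorm_eq_ofReal (by have h0 := hx.1; positivity)
      rwa [lintegral_congr_ae hae]
  have hio2 : IntegrableOn (fun x : ℝ => x⁻¹) (Ioo (0:ℝ) (2/3)) := by
    have h2 := hio.const_mul 2
    have heq : (fun x : ℝ => 2 * (2*x)⁻¹) = fun x : ℝ => x⁻¹ := by
      funext x; rw [mul_inv]; ring
    rwa [heq] at h2
  have hio3 : IntegrableOn (fun x : ℝ => x ^ (-1:ℝ)) (Ioo (0:ℝ) (2/3)) := by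
    apply hio2.congr_fun ?_ measurableSet_Ioo
    intro x hx
    exact (Real.rpow_neg_one x).symm
  rw [intervalIntegral.integrableOn_Ioo_rpow_iff (by norm_num : (0:ℝ) < 2/3)] at hio3
  exact absurd hio3 (by norm_num)

end RRside

lemma not_int : ¬ IntegrableOn (exOmega.indicator (fun p => (p 0 * p 1)⁻¹)) exOmega := by
  intro h
  have h2 : Integrable (exOmega.indicator (fun p : E2 => (p 0 * p 1)⁻¹)) volume := by
    have h1 := (integrable_indicator_iff hΩm).2 h
    rwa [indicator_indicator, inter_self] at h1
  have h3 := h2.hasFiniteIntegral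
  rw [HasFiniteIntegral] at h3
  have hle : ∫⁻ z, Hl z ≤
      ∫⁻ p, (‖exOmega.indicator (fun p : E2 => (p 0 * p 1)⁻¹) p‖₊ : ℝ≥0∞) := by
    rw [← (MeasurePreserving.symm T hT).lintegral_comp_emb T.symm.measurableEmbedding
      (fun p => (‖exOmega.indicator (fun p : E2 => (p 0 * p 1)⁻¹) p‖₊ : ℝ≥0∞))]
    apply lintegral_mono
    intro z
    beta_reduce
    by_cases hz : z ∈ Sl
    · have hz' := hz
      obtain ⟨⟨ha, hb⟩, hc, hd⟩ := hz'
      have hp : T.symm z ∈ exOmega := by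
        rw [exOmega_eq, mem_preimage, MeasurableEquiv.apply_symm_apply]
        exact ⟨ha, by norm_num at hb ⊢; linarith, by linarith, by linarith [hb],
          by linarith, by linarith⟩
      rw [Hl, indicator_of_mem hz]
      have hco : (T.symm z) 0 = z.1 := rfl
      have hco2 : (T.symm z) 1 = z.2 := rfl
      have hz2 : 0 < z.2 := by linarith
      rw [indicator_of_mem hp, hco, hco2,
        ← enorm_eq_nnnorm, Real.enorm_eq_ofReal (le_of_lt (inv_pos.2 (mul_pos ha hz2)))]
      apply ENNReal.ofReal_le_ofReal
      apply inv_anti₀ (mul_pos ha hz2)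
      calc z.1 * z.2 ≤ z.1 * z.1 := mul_le_mul_of_nonneg_left hd.le ha.le
        _ = z.1 ^ 2 := (sq z.1).symm
    · rw [Hl, indicator_of_notMem hz]
      exact zero_le
  rw [Hl_lintegral] at hle
  exact absurd h3 (by rw [lt_top_iff_ne_top]; exact fun hne => hne (top_le_iff.1 hle))

lemma hBint : Integrable (exOmega.indicator (fun p : E2 => 4 * (p 0)⁻¹)) := by
  constructor
  · exact ((meas_coord0.inv.const_mul 4).indicator hΩm).aestronglyMeasurable
  · rw [HasFiniteIntegral]
    have hle : ∫⁻ p, (‖exOmega.indicator (fun p : E2 => 4 * (p 0)⁻¹) p‖₊ : ℝ≥0∞) ≤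
        ∫⁻ z, F2 z := by
      rw [← (MeasurePreserving.symm T hT).lintegral_comp_emb T.symm.measurableEmbedding
        (fun p => (‖exOmega.indicator (fun p : E2 => 4 * (p 0)⁻¹) p‖₊ : ℝ≥0∞))]
      apply lintegral_mono
      intro z
      beta_reduce
      by_cases hp : T.symm z ∈ exOmega
      · have hz : z ∈ Om' := by
          rw [exOmega_eq, mem_preimage, MeasurableEquiv.apply_symm_apply] at hp
          exact hp
        obtain ⟨h1, h2, h3, h4, h5, h6⟩ := hz
        have hzS2 : z ∈ S2 := ⟨⟨h1, h2⟩, by constructor <;> [linarith; linarith]⟩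
        rw [indicator_of_mem hp]
        have hco : (T.symm z) 0 = z.1 := rfl
        rw [hco, F2, indicator_of_mem hzS2,
          ← enorm_eq_nnnorm, Real.enorm_eq_ofReal (by positivity : (0:ℝ) ≤ 4 * z.1⁻¹)]
      · rw [indicator_of_notMem hp]
        simp
    exact lt_of_le_of_lt hle F2_lintegral

end Aux13

/-- **Example A.2**: with `d = 2`, `μ = δ_{e₁} + δ_{e₂}` (corresponding to the operator
`(-∂₁²)^s + (-∂₂²)^s`) and `u(x,y) = (xy)⁻¹` on `Ω`, `u = 0` elsewhere, the function `u`
is not integrable on `Ω` but belongs to the tail space `L¹(ℝ², ν⋆(x)dx)`. -/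
theorem stmt13 (s : ℝ) (hs : 0 < s) (hs1 : s < 1) :
    ¬ IntegrableOn (exOmega.indicator (fun p => (p 0 * p 1)⁻¹)) exOmega ∧
    Integrable (fun x => |exOmega.indicator (fun p => (p 0 * p 1)⁻¹) x| *
      nuStar s (Measure.dirac e₁ + Measure.dirac e₂) exOmega x) := by
  constructor
  · exact Aux13.not_int
  · refine Integrable.mono' Aux13.hBint ?_ (Eventually.of_forall fun p => ?_)
    · apply Measurable.aestronglyMeasurable
      exact ((((Aux13.meas_coord0.mul Aux13.meas_coord1).inv).indicator Aux13.hΩm).abs).mul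
        (Aux13.nuStar_meas s)
    · rw [Real.norm_eq_abs,
        abs_of_nonneg (mul_nonneg (abs_nonneg _) (Aux13.nuStar_nonneg s p))]
      exact Aux13.prod_le s hs p

end
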